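/- Let G = A ∗_Λ B be an amalgamated free product with Λ a proper subgroup of both A and B, and let X be the set of elements of G whose normal form a₁b₁⋯aₙbₙλ has a₁ non-trivial. Then: (i) λX = X for every λ ∈ Λ; (ii) for every g ∈ G, the sets (Λ\X)g and Λ\X are almost equal; and (iii) X does not depend on the choice of the right transversals T and T′. In particular, X is a Λ-almost invariant subset of G. -/

import Mathlib

/-!
Statement 12: for `G = A ∗_Λ B` with `Λ` proper in `A` and `B`, and `X` the set of
elements whose normal form `a₁b₁⋯aₙbₙλ` has `a₁` non-trivial: (i) `λX = X` for every
`λ ∈ Λ`; (ii) `(Λ\X)g` is almost equal to `Λ\X` for every `g ∈ G`; (iii) `X` does not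
depend on the choice of transversals.  In particular `X` is `Λ`-almost invariant.
-/

open scoped Pointwise symmDiff

/-- `T` is a right transversal for `Λ` in `A` containing `1`: `T ⊆ A`, `1 ∈ T`, and each
coset `aΛ` (`a ∈ A`) contains exactly one element of `T`. -/
def IsRightTransversalOf {G : Type*} [Group G] (Lam A : Subgroup G) (T : Set G) : Prop :=
  T ⊆ (A : Set G) ∧ (1 : G) ∈ T ∧ ∀ a ∈ A, ∃! t, t ∈ T ∧ t⁻¹ * a ∈ Lam

/-- `l` is a normal word with respect to the transversals `T` (for `Λ` in `A`) and `T'`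
(for `Λ` in `B`): a list of non-identity letters alternating between `T` and `T'`.
Such a list, followed by an element `λ ∈ Λ`, is the normal form `a₁b₁⋯aₙbₙλ` (where `a₁`,
resp. `bₙ`, may be trivial, i.e. absent). -/
def IsNormalWord {G : Type*} [Group G] (T T' : Set G) (l : List G) : Prop :=
  (∀ x ∈ l, x ≠ 1 ∧ (x ∈ T ∨ x ∈ T')) ∧
    l.Chain' fun x y => (x ∈ T ∧ y ∈ T') ∨ (x ∈ T' ∧ y ∈ T)

/-- Every element of `G` is expressible uniquely in the normal form `a₁b₁⋯aₙbₙλ`.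
Together with `IsRightTransversalOf` hypotheses and `Λ = A ⊓ B`, this encodes that `G` is
the amalgamated free product `A ∗_Λ B`. -/
def HasUniqueNormalForms {G : Type*} [Group G] (Lam : Subgroup G) (T T' : Set G) : Prop :=
  ∀ g : G, ∃! p : List G × G,
    IsNormalWord T T' p.1 ∧ p.2 ∈ Lam ∧ g = p.1.prod * p.2

/-- The set `X` of elements of `G` whose normal form `a₁b₁⋯aₙbₙλ` has `a₁` non-trivial,
i.e. whose normal word is nonempty and begins with a letter of `T`. -/
def amalgX {G : Type*} [Group G] (Lam : Subgroup G) (T T' : Set G) : Set G :=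
  {g : G | ∃ (l : List G) (lam : G), IsNormalWord T T' l ∧ lam ∈ Lam ∧
    g = l.prod * lam ∧ ∃ x, l.head? = some x ∧ x ∈ T}

/-- The image of a subset `X ⊆ G` in the set `H\G` of right cosets `Hg`
(the quotient of `G` by the left multiplication action of `H`). -/
def rproj {G : Type*} [Group G] (H : Subgroup G) (X : Set G) :
    Set (Quotient (QuotientGroup.rightRel H)) :=
  Quotient.mk (QuotientGroup.rightRel H) '' X

/-- Two sets are almost equal if their symmetric difference is finite. -/
def AlmostEqSets {α : Type*} (A B : Set α) : Prop :=
  (A ∆ B).Finite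

/-- `X ⊆ G` is `H`-almost invariant: `hX = X` for all `h ∈ H`, and for every `g ∈ G`
the sets `(H\X)g` and `H\X` are almost equal. -/
def IsAlmostInvariant {G : Type*} [Group G] (H : Subgroup G) (X : Set G) : Prop :=
  (∀ h ∈ H, h • X = X) ∧
    ∀ g : G, AlmostEqSets (rproj H ((fun x => x * g) '' X)) (rproj H X)

section Helpers

variable {G : Type*} [Group G] {A B Lam : Subgroup G} {T T' : Set G}

lemma transversal_lam_eq_one (hT : IsRightTransversalOf Lam A T) {x : G}
    (hx : x ∈ T) (hxl : x ∈ Lam) : x = 1 := by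
  obtain ⟨hTA, h1, hu⟩ := hT
  obtain ⟨t, -, ht⟩ := hu x (hTA hx)
  have e1 : x = t := ht x ⟨hx, by simpa using Lam.one_mem⟩
  have e2 : (1 : G) = t := ht 1 ⟨h1, by simpa using hxl⟩
  rw [e1, ← e2]

lemma transversal_side (hAB : Lam = A ⊓ B) (hT : IsRightTransversalOf Lam A T)
    {x : G} (hx : x ∈ T) (hx1 : x ≠ 1) : x ∈ A ∧ x ∉ Lam ∧ x ∉ B := by
  have hxA := hT.1 hx
  have hxL : x ∉ Lam := fun h => hx1 (transversal_lam_eq_one hT hx h)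
  exact ⟨hxA, hxL, fun hxB => hxL (by rw [hAB]; exact Subgroup.mem_inf.mpr ⟨hxA, hxB⟩)⟩

lemma transversal_rep (hT : IsRightTransversalOf Lam A T) {d : G} (hd : d ∈ A) :
    ∃ t μ, t ∈ T ∧ μ ∈ Lam ∧ d = t * μ ∧ (d ∉ Lam → t ≠ 1) := by
  obtain ⟨t, ⟨htT, htμ⟩, -⟩ := hT.2.2 d hd
  refine ⟨t, t⁻¹ * d, htT, htμ, by group, fun hdL ht1 => hdL ?_⟩
  subst ht1; simpa using htμ

lemma head?_append_left {α : Type*} {L : List α} (M : List α) {x : α}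
    (h : L.head? = some x) : (L ++ M).head? = some x := by
  cases L with
  | nil => simp at h
  | cons a l => simpa using h

lemma push_lemma (hAB : Lam = A ⊓ B) (hT : IsRightTransversalOf Lam A T)
    (hT' : IsRightTransversalOf Lam B T') :
    ∀ (l : List G), (∀ x ∈ l, (x ∈ A ∧ x ∉ Lam) ∨ (x ∈ B ∧ x ∉ Lam)) →
    l.Chain' (fun x y => (x ∈ A ∧ y ∈ B) ∨ (x ∈ B ∧ y ∈ A)) →
    ∀ μ ∈ Lam, ∃ l' μ', IsNormalWord T T' l' ∧ μ' ∈ Lam ∧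
      μ * l.prod = l'.prod * μ' ∧
      List.Forall₂ (fun x y => (x ∈ A → y ∈ T) ∧ (x ∈ B → y ∈ T')) l l' := by
  intro l
  induction l with
  | nil =>
    intro _ _ μ hμ
    exact ⟨[], μ, ⟨by simp, List.isChain_nil⟩, hμ, by simp, List.Forall₂.nil⟩
  | cons x rest ih =>
    intro hmem hch μ hμ
    have hx := hmem x List.mem_cons_self
    have hrestmem := fun y hy => hmem y (List.mem_cons_of_mem _ hy)
    have hch' := List.isChain_cons.mp hch
    obtain ⟨hμA, hμB⟩ := Subgroup.mem_inf.mp (hAB ▸ hμ)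
    rcases hx with ⟨hxA, hxL⟩ | ⟨hxB, hxL⟩
    · have hxnB : x ∉ B := fun h => hxL (by rw [hAB]; exact Subgroup.mem_inf.mpr ⟨hxA, h⟩)
      have hμx : μ * x ∈ A := A.mul_mem hμA hxA
      have hμxL : μ * x ∉ Lam := fun h => hxL (by simpa using Lam.mul_mem (Lam.inv_mem hμ) h)
      obtain ⟨t, ν, htT, hν, heq, ht1⟩ := transversal_rep hT hμx
      have ht1' := ht1 hμxL
      obtain ⟨rest', ν', hn', hν', hp', hf'⟩ := ih hrestmem hch'.2 ν hν
      refine ⟨t :: rest', ν', ⟨?_, ?_⟩, hν', ?_,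
        List.Forall₂.cons ⟨fun _ => htT, fun hxB => absurd hxB hxnB⟩ hf'⟩
      · intro y hy
        rcases List.mem_cons.mp hy with rfl | hy
        · exact ⟨ht1', Or.inl htT⟩
        · exact hn'.1 y hy
      · show List.IsChain _ _; rw [List.isChain_cons]
        refine ⟨?_, hn'.2⟩
        intro z hz
        cases rest with
        | nil => cases hf'; simp at hz
        | cons w ws =>
          cases hf' with
          | cons hrel _ =>
            have hw : w ∈ B := by
              rcases hch'.1 w (by simp) with ⟨_, h⟩ | ⟨h, _⟩
              · exact h
              · exact absurd h hxnB
            have hz' : z ∈ T' := by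
              have := hrel.2 hw
              simp only [List.head?_cons, Option.mem_def, Option.some_inj] at hz
              rw [← hz]; exact this
            exact Or.inl ⟨htT, hz'⟩
      · rw [List.prod_cons, List.prod_cons, ← mul_assoc, heq, mul_assoc, hp', ← mul_assoc]
    · have hxnA : x ∉ A := fun h => hxL (by rw [hAB]; exact Subgroup.mem_inf.mpr ⟨h, hxB⟩)
      have hμx : μ * x ∈ B := B.mul_mem hμB hxB
      have hμxL : μ * x ∉ Lam := fun h => hxL (by simpa using Lam.mul_mem (Lam.inv_mem hμ) h)
      obtain ⟨t, ν, htT, hν, heq, ht1⟩ := transversal_rep hT' hμx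
      have ht1' := ht1 hμxL
      obtain ⟨rest', ν', hn', hν', hp', hf'⟩ := ih hrestmem hch'.2 ν hν
      refine ⟨t :: rest', ν', ⟨?_, ?_⟩, hν', ?_,
        List.Forall₂.cons ⟨fun hxA => absurd hxA hxnA, fun _ => htT⟩ hf'⟩
      · intro y hy
        rcases List.mem_cons.mp hy with rfl | hy
        · exact ⟨ht1', Or.inr htT⟩
        · exact hn'.1 y hy
      · show List.IsChain _ _; rw [List.isChain_cons]
        refine ⟨?_, hn'.2⟩
        intro z hz
        cases rest with
        | nil => cases hf'; simp at hz
        | cons w ws =>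
          cases hf' with
          | cons hrel _ =>
            have hw : w ∈ A := by
              rcases hch'.1 w (by simp) with ⟨h, _⟩ | ⟨_, h⟩
              · exact absurd h hxnA
              · exact h
            have hz' : z ∈ T := by
              have := hrel.1 hw
              simp only [List.head?_cons, Option.mem_def, Option.some_inj] at hz
              rw [← hz]; exact this
            exact Or.inr ⟨htT, hz'⟩
      · rw [List.prod_cons, List.prod_cons, ← mul_assoc, heq, mul_assoc, hp', ← mul_assoc]

lemma normal_alt (hAB : Lam = A ⊓ B) (hT : IsRightTransversalOf Lam A T)
    (hT' : IsRightTransversalOf Lam B T') {l : List G} (hl : IsNormalWord T T' l) :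
    (∀ x ∈ l, (x ∈ A ∧ x ∉ Lam) ∨ (x ∈ B ∧ x ∉ Lam)) ∧
    l.Chain' (fun x y => (x ∈ A ∧ y ∈ B) ∨ (x ∈ B ∧ y ∈ A)) := by
  have hAB' : Lam = B ⊓ A := by rw [hAB, inf_comm]
  constructor
  · intro x hx
    obtain ⟨hx1, hTT⟩ := hl.1 x hx
    rcases hTT with h | h
    · obtain ⟨a, b, -⟩ := transversal_side hAB hT h hx1
      exact Or.inl ⟨a, b⟩
    · obtain ⟨a, b, -⟩ := transversal_side hAB' hT' h hx1
      exact Or.inr ⟨a, b⟩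
  · refine hl.2.imp (fun a b h => ?_)
    rcases h with ⟨h1, h2⟩ | ⟨h1, h2⟩
    · exact Or.inl ⟨hT.1 h1, hT'.1 h2⟩
    · exact Or.inr ⟨hT'.1 h1, hT.1 h2⟩

lemma push_mem (hAB : Lam = A ⊓ B) (hT : IsRightTransversalOf Lam A T)
    (hT' : IsRightTransversalOf Lam B T') {T₂ T₂' : Set G}
    (hT₂ : IsRightTransversalOf Lam A T₂) (hT₂' : IsRightTransversalOf Lam B T₂')
    {g μ : G} (hμ : μ ∈ Lam) (hg : g ∈ amalgX Lam T₂ T₂') : μ * g ∈ amalgX Lam T T' := by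
  obtain ⟨l, lam, hl, hlam, rfl, hd, hhd, hdT⟩ := hg
  obtain ⟨hmem, hch⟩ := normal_alt hAB hT₂ hT₂' hl
  obtain ⟨l', μ', hn', hμ', hp', hf'⟩ := push_lemma hAB hT hT' l hmem hch μ hμ
  refine ⟨l', μ' * lam, hn', Lam.mul_mem hμ' hlam, by rw [← mul_assoc, hp', mul_assoc], ?_⟩
  cases l with
  | nil => simp at hhd
  | cons h tl =>
    cases hf' with
    | cons hrel _ =>
      have hh : h = hd := by simpa using hhd
      subst hh
      have hA : h ∈ A := hT₂.1 hdT
      exact ⟨_, rfl, hrel.1 hA⟩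

lemma concat_lemma (hAB : Lam = A ⊓ B) (hT : IsRightTransversalOf Lam A T)
    (hT' : IsRightTransversalOf Lam B T') {l : List G} (hl : IsNormalWord T T' l)
    (hne : l ≠ []) {c : G} (hc : c ∈ A ∨ c ∈ B) :
    (∃ l' lam', IsNormalWord T T' l' ∧ lam' ∈ Lam ∧ l.prod * c = l'.prod * lam' ∧
      (∀ x, l.head? = some x → x ∈ T → ∃ y, l'.head? = some y ∧ y ∈ T)) ∨
    (∃ s, l = [s] ∧ s * c ∈ Lam) := by
  have hAB' : Lam = B ⊓ A := by rw [hAB, inf_comm]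
  by_cases hcL : c ∈ Lam
  · exact Or.inl ⟨l, c, hl, hcL, rfl, fun x h hx => ⟨x, h, hx⟩⟩
  obtain ⟨l₀, s, rfl⟩ := (List.eq_nil_or_concat' l).resolve_left hne
  obtain ⟨hs1, hsT⟩ := hl.1 s (by simp)
  obtain ⟨hch₀, -, hlast⟩ := List.isChain_append.mp hl.2
  have hletters₀ : ∀ x ∈ l₀, x ≠ 1 ∧ (x ∈ T ∨ x ∈ T') :=
    fun x hx => hl.1 x (List.mem_append_left _ hx)
  -- side of s
  rcases hsT with hsT | hsT'
  · obtain ⟨hsA, hsL, hsnB⟩ := transversal_side hAB hT hsT hs1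
    rcases hc with hcA | hcB
    · -- same side in A
      by_cases hdL : s * c ∈ Lam
      · cases l₀ with
        | nil => exact Or.inr ⟨s, by simp, hdL⟩
        | cons a l₁ =>
          refine Or.inl ⟨a :: l₁, s * c, ⟨fun x hx => hletters₀ x hx, hch₀⟩, hdL, ?_, ?_⟩
          · rw [List.prod_append]
            simp [mul_assoc]
          · intro x hx hxT
            refine ⟨x, ?_, hxT⟩
            simpa using hx
      · obtain ⟨t, ν, htT, hν, hdeq, ht1⟩ := transversal_rep hT (A.mul_mem hsA hcA)
        have ht1' := ht1 hdL
        refine Or.inl ⟨l₀ ++ [t], ν, ⟨?_, ?_⟩, hν, ?_, ?_⟩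
        · intro y hy
          rcases List.mem_append.mp hy with hy | hy
          · exact hletters₀ y hy
          · simp only [List.mem_singleton] at hy
            subst hy
            exact ⟨ht1', Or.inl htT⟩
        · show List.IsChain _ _; rw [List.isChain_append]
          refine ⟨hch₀, by simp, ?_⟩
          intro x hx y hy
          simp only [List.head?_cons, Option.mem_def, Option.some_inj] at hy
          subst hy
          rcases hlast x hx s (by simp) with ⟨hx1, hs2⟩ | ⟨hx1, hs2⟩
          · exact absurd (hT'.1 hs2) hsnB
          · exact Or.inr ⟨hx1, htT⟩
        · simp only [List.prod_append, List.prod_cons, List.prod_nil, mul_one]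
          rw [mul_assoc, mul_assoc, hdeq]
        · intro x hx hxT
          cases l₀ with
          | nil => exact ⟨t, by simp, htT⟩
          | cons a l₁ =>
            refine ⟨x, ?_, hxT⟩
            simp only [List.cons_append, List.head?_cons, Option.some_inj] at hx ⊢
            exact hx
    · -- cross: s in A side, c ∈ B
      obtain ⟨t, ν, htT', hν, hceq, ht1⟩ := transversal_rep hT' hcB
      have ht1' := ht1 hcL
      refine Or.inl ⟨(l₀ ++ [s]) ++ [t], ν, ⟨?_, ?_⟩, hν, ?_, ?_⟩
      · intro y hy
        rcases List.mem_append.mp hy with hy | hy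
        · exact hl.1 y hy
        · simp only [List.mem_singleton] at hy
          subst hy
          exact ⟨ht1', Or.inr htT'⟩
      · show List.IsChain _ _; rw [List.isChain_append]
        refine ⟨hl.2, by simp, ?_⟩
        intro x hx y hy
        simp only [List.head?_cons, Option.mem_def, Option.some_inj] at hy
        subst hy
        simp only [List.getLast?_concat, Option.mem_def, Option.some_inj] at hx
        subst hx
        exact Or.inl ⟨hsT, htT'⟩
      · simp only [List.prod_append, List.prod_cons, List.prod_nil, mul_one, mul_assoc, ← hceq]
      · intro x hx hxT
        exact ⟨x, head?_append_left _ hx, hxT⟩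
  · obtain ⟨hsB, hsL, hsnA⟩ := transversal_side hAB' hT' hsT' hs1
    rcases hc with hcA | hcB
    · -- cross: s in B side, c ∈ A
      obtain ⟨t, ν, htT, hν, hceq, ht1⟩ := transversal_rep hT hcA
      have ht1' := ht1 hcL
      refine Or.inl ⟨(l₀ ++ [s]) ++ [t], ν, ⟨?_, ?_⟩, hν, ?_, ?_⟩
      · intro y hy
        rcases List.mem_append.mp hy with hy | hy
        · exact hl.1 y hy
        · simp only [List.mem_singleton] at hy
          subst hy
          exact ⟨ht1', Or.inl htT⟩
      · show List.IsChain _ _; rw [List.isChain_append]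
        refine ⟨hl.2, by simp, ?_⟩
        intro x hx y hy
        simp only [List.head?_cons, Option.mem_def, Option.some_inj] at hy
        subst hy
        simp only [List.getLast?_concat, Option.mem_def, Option.some_inj] at hx
        subst hx
        exact Or.inr ⟨hsT', htT⟩
      · simp only [List.prod_append, List.prod_cons, List.prod_nil, mul_one, mul_assoc, ← hceq]
      · intro x hx hxT
        exact ⟨x, head?_append_left _ hx, hxT⟩
    · -- same side in B
      by_cases hdL : s * c ∈ Lam
      · cases l₀ with
        | nil => exact Or.inr ⟨s, by simp, hdL⟩
        | cons a l₁ =>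
          refine Or.inl ⟨a :: l₁, s * c, ⟨fun x hx => hletters₀ x hx, hch₀⟩, hdL, ?_, ?_⟩
          · rw [List.prod_append]
            simp [mul_assoc]
          · intro x hx hxT
            refine ⟨x, ?_, hxT⟩
            simpa using hx
      · obtain ⟨t, ν, htT', hν, hdeq, ht1⟩ := transversal_rep hT' (B.mul_mem hsB hcB)
        have ht1' := ht1 hdL
        refine Or.inl ⟨l₀ ++ [t], ν, ⟨?_, ?_⟩, hν, ?_, ?_⟩
        · intro y hy
          rcases List.mem_append.mp hy with hy | hy
          · exact hletters₀ y hy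
          · simp only [List.mem_singleton] at hy
            subst hy
            exact ⟨ht1', Or.inr htT'⟩
        · show List.IsChain _ _; rw [List.isChain_append]
          refine ⟨hch₀, by simp, ?_⟩
          intro x hx y hy
          simp only [List.head?_cons, Option.mem_def, Option.some_inj] at hy
          subst hy
          rcases hlast x hx s (by simp) with ⟨hx1, hs2⟩ | ⟨hx1, hs2⟩
          · exact Or.inl ⟨hx1, htT'⟩
          · exact absurd (hT.1 hs2) hsnA
        · simp only [List.prod_append, List.prod_cons, List.prod_nil, mul_one]
          rw [mul_assoc, mul_assoc, hdeq]
        · intro x hx hxT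
          cases l₀ with
          | nil =>
            simp only [List.nil_append, List.head?_cons, Option.some_inj] at hx
            subst hx
            exact absurd (hT.1 hxT) hsnA
          | cons a l₁ =>
            refine ⟨x, ?_, hxT⟩
            simp only [List.cons_append, List.head?_cons, Option.some_inj] at hx ⊢
            exact hx

lemma lam_not_mem_amalgX (hNF : HasUniqueNormalForms Lam T T') {lam : G} (h : lam ∈ Lam) :
    lam ∉ amalgX Lam T T' := by
  rintro ⟨l, lam', hl, hlam', heq, hd, hhd, -⟩
  obtain ⟨p, -, hu⟩ := hNF lam
  have h1 := hu (l, lam') ⟨hl, hlam', heq⟩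
  have h2 := hu ([], lam) ⟨⟨by simp, List.isChain_nil⟩, h, by simp⟩
  rw [← h2] at h1
  have : l = [] := congrArg Prod.fst h1
  rw [this] at hhd
  simp at hhd

lemma mul_right_memA (hAB : Lam = A ⊓ B) (hT : IsRightTransversalOf Lam A T)
    (hT' : IsRightTransversalOf Lam B T') {g c₀ : G} (hg : g ∈ amalgX Lam T T')
    (hc : c₀ ∈ A) : g * c₀ ∈ amalgX Lam T T' ∨ g * c₀ ∈ Lam := by
  obtain ⟨l, lam, hl, hlam, rfl, hd, hhd, hdT⟩ := hg
  have hlamA : lam ∈ A := (Subgroup.mem_inf.mp (hAB ▸ hlam)).1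
  have hne : l ≠ [] := by rintro rfl; simp at hhd
  have hcA' : lam * c₀ ∈ A := A.mul_mem hlamA hc
  rcases concat_lemma hAB hT hT' hl hne (Or.inl hcA') with
    ⟨l', lam', hn', hlam', hp', hhead⟩ | ⟨s, hls, hsc⟩
  · left
    obtain ⟨y, hy, hyT⟩ := hhead hd hhd hdT
    exact ⟨l', lam', hn', hlam', by rw [mul_assoc, hp'], y, hy, hyT⟩
  · right
    subst hls
    simpa [mul_assoc] using hsc

lemma mul_right_memB (hAB : Lam = A ⊓ B) (hT : IsRightTransversalOf Lam A T)
    (hT' : IsRightTransversalOf Lam B T') {g c₀ : G} (hg : g ∈ amalgX Lam T T')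
    (hc : c₀ ∈ B) : g * c₀ ∈ amalgX Lam T T' := by
  obtain ⟨l, lam, hl, hlam, rfl, hd, hhd, hdT⟩ := hg
  have hlamB : lam ∈ B := (Subgroup.mem_inf.mp (hAB ▸ hlam)).2
  have hne : l ≠ [] := by rintro rfl; simp at hhd
  have hcB' : lam * c₀ ∈ B := B.mul_mem hlamB hc
  rcases concat_lemma hAB hT hT' hl hne (Or.inr hcB') with
    ⟨l', lam', hn', hlam', hp', hhead⟩ | ⟨s, hls, hsc⟩
  · obtain ⟨y, hy, hyT⟩ := hhead hd hhd hdT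
    exact ⟨l', lam', hn', hlam', by rw [mul_assoc, hp'], y, hy, hyT⟩
  · exfalso
    subst hls
    have hds : s = hd := by simpa using hhd
    subst hds
    have hs1 : s ≠ 1 := (hl.1 s (by simp)).1
    obtain ⟨-, -, hsnB⟩ := transversal_side hAB hT hdT hs1
    have hscB : s * (lam * c₀) ∈ B := by
      rw [hAB] at hsc
      exact (Subgroup.mem_inf.mp hsc).2
    have : s ∈ B := by
      have := B.mul_mem hscB (B.inv_mem hcB')
      simpa [mul_assoc] using this
    exact hsnB this

end Helpers

theorem amalgX_is_almost_invariant {G : Type*} [Group G]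
    (A B Lam : Subgroup G) (hA : Lam < A) (hB : Lam < B) (hAB : Lam = A ⊓ B)
    (T T' : Set G)
    (hT : IsRightTransversalOf Lam A T) (hT' : IsRightTransversalOf Lam B T')
    (hNF : HasUniqueNormalForms Lam T T')
    (X : Set G) (hX : X = amalgX Lam T T') :
    (∀ lam ∈ Lam, lam • X = X) ∧
    (∀ g : G, AlmostEqSets (rproj Lam ((fun x => x * g) '' X)) (rproj Lam X)) ∧
    (∀ T₂ T₂' : Set G, IsRightTransversalOf Lam A T₂ → IsRightTransversalOf Lam B T₂' →
      HasUniqueNormalForms Lam T₂ T₂' → amalgX Lam T₂ T₂' = X) ∧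
    IsAlmostInvariant Lam X := by
  subst hX
  have hLA : Lam ≤ A := le_of_lt hA
  -- Part (i)
  have part1 : ∀ lam ∈ Lam, lam • amalgX Lam T T' = amalgX Lam T T' := by
    intro lam hlam
    ext y
    rw [Set.mem_smul_set_iff_inv_smul_mem, smul_eq_mul]
    constructor
    · intro h
      have := push_mem hAB hT hT' hT hT' hlam h
      simpa using this
    · intro h
      exact push_mem hAB hT hT' hT hT' (Lam.inv_mem hlam) h
  -- Part (iii)
  have part3 : ∀ T₂ T₂' : Set G, IsRightTransversalOf Lam A T₂ →
      IsRightTransversalOf Lam B T₂' → HasUniqueNormalForms Lam T₂ T₂' →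
      amalgX Lam T₂ T₂' = amalgX Lam T T' := by
    intro T₂ T₂' hT₂ hT₂' _
    apply Set.Subset.antisymm
    · intro x hx
      have := push_mem hAB hT hT' hT₂ hT₂' Lam.one_mem hx
      simpa using this
    · intro x hx
      have := push_mem hAB hT₂ hT₂' hT hT' Lam.one_mem hx
      simpa using this
  -- Part (ii): quotient machinery
  have hcompat : ∀ g x y : G, QuotientGroup.rightRel Lam x y →
      QuotientGroup.rightRel Lam (x * g) (y * g) := by
    intro g x y h
    rw [QuotientGroup.rightRel_apply] at h ⊢
    simpa [mul_assoc, mul_inv_rev] using h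
  let φ : G → Quotient (QuotientGroup.rightRel Lam) → Quotient (QuotientGroup.rightRel Lam) :=
    fun g => Quotient.map (fun x => x * g) (hcompat g)
  have hproj : ∀ (g : G) (Y : Set G),
      rproj Lam ((fun x => x * g) '' Y) = φ g '' rproj Lam Y := by
    intro g Y
    unfold rproj
    rw [Set.image_image, Set.image_image]
    rfl
  have hinj : ∀ g : G, Function.Injective (φ g) := by
    intro g q1 q2
    refine Quotient.inductionOn₂ q1 q2 ?_
    intro x y h
    have h' : Quotient.mk (QuotientGroup.rightRel Lam) (x * g) =
        Quotient.mk (QuotientGroup.rightRel Lam) (y * g) := h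
    rw [Quotient.eq] at h' ⊢
    have h'' := QuotientGroup.rightRel_apply.mp h'
    apply QuotientGroup.rightRel_apply.mpr
    simpa [mul_assoc, mul_inv_rev] using h''
  have aeq_refl : ∀ S : Set (Quotient (QuotientGroup.rightRel Lam)), AlmostEqSets S S := by
    intro S
    rw [AlmostEqSets, symmDiff_self]
    exact Set.finite_empty
  have aeq_trans : ∀ {S1 S2 S3 : Set (Quotient (QuotientGroup.rightRel Lam))},
      AlmostEqSets S1 S2 → AlmostEqSets S2 S3 → AlmostEqSets S1 S3 := by
    intro S1 S2 S3 h1 h2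
    exact Set.Finite.subset (h1.union h2) (symmDiff_triangle S1 S2 S3)
  have aeq_image : ∀ (g : G) {S1 S2 : Set (Quotient (QuotientGroup.rightRel Lam))},
      AlmostEqSets S1 S2 → AlmostEqSets (φ g '' S1) (φ g '' S2) := by
    intro g S1 S2 h
    rw [AlmostEqSets, ← Set.image_symmDiff (hinj g)]
    exact h.image _
  have hP1 : AlmostEqSets (rproj Lam ((fun x => x * (1:G)) '' amalgX Lam T T'))
      (rproj Lam (amalgX Lam T T')) := by
    have : (fun x => x * (1:G)) '' amalgX Lam T T' = amalgX Lam T T' := by simp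
    rw [this]
    exact aeq_refl _
  have hPmul : ∀ g h : G,
      AlmostEqSets (rproj Lam ((fun x => x * g) '' amalgX Lam T T'))
        (rproj Lam (amalgX Lam T T')) →
      AlmostEqSets (rproj Lam ((fun x => x * h) '' amalgX Lam T T'))
        (rproj Lam (amalgX Lam T T')) →
      AlmostEqSets (rproj Lam ((fun x => x * (g * h)) '' amalgX Lam T T'))
        (rproj Lam (amalgX Lam T T')) := by
    intro g h hg hh
    have e : (fun x => x * (g * h)) '' amalgX Lam T T' =
        (fun x => x * h) '' ((fun x => x * g) '' amalgX Lam T T') := by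
      rw [Set.image_image]
      simp [mul_assoc]
    rw [e, hproj h]
    refine aeq_trans (aeq_image h hg) ?_
    rw [← hproj h]
    exact hh
  have hPA : ∀ a ∈ A,
      AlmostEqSets (rproj Lam ((fun x => x * a) '' amalgX Lam T T'))
        (rproj Lam (amalgX Lam T T')) := by
    intro a ha
    apply Set.Finite.subset (Set.Finite.insert
      (Quotient.mk (QuotientGroup.rightRel Lam) (1 : G))
      (Set.finite_singleton (Quotient.mk (QuotientGroup.rightRel Lam) a)))
    intro q hq
    simp only [Set.mem_insert_iff, Set.mem_singleton_iff]
    rcases Set.mem_symmDiff.mp hq with ⟨hq1, hq2⟩ | ⟨hq1, hq2⟩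
    · obtain ⟨y, ⟨x, hxX, rfl⟩, rfl⟩ := hq1
      have hxa : x * a ∉ amalgX Lam T T' := fun h => hq2 ⟨x * a, h, rfl⟩
      have hmem : x * a ∈ Lam := (mul_right_memA hAB hT hT' hxX ha).resolve_left hxa
      left
      rw [Quotient.eq]
      apply QuotientGroup.rightRel_apply.mpr
      simpa using Lam.inv_mem hmem
    · obtain ⟨x, hxX, rfl⟩ := hq1
      have hxa : x * a⁻¹ ∉ amalgX Lam T T' := by
        intro h
        exact hq2 ⟨x, ⟨x * a⁻¹, h, by simp⟩, rfl⟩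
      have hmem : x * a⁻¹ ∈ Lam :=
        (mul_right_memA hAB hT hT' hxX (A.inv_mem ha)).resolve_left hxa
      right
      rw [Quotient.eq]
      apply QuotientGroup.rightRel_apply.mpr
      simpa [mul_inv_rev] using Lam.inv_mem hmem
  have hPB : ∀ b ∈ B,
      AlmostEqSets (rproj Lam ((fun x => x * b) '' amalgX Lam T T'))
        (rproj Lam (amalgX Lam T T')) := by
    intro b hb
    have e : (fun x => x * b) '' amalgX Lam T T' = amalgX Lam T T' := by
      apply Set.Subset.antisymm
      · rintro y ⟨x, hx, rfl⟩
        exact mul_right_memB hAB hT hT' hx hb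
      · intro y hy
        exact ⟨y * b⁻¹, mul_right_memB hAB hT hT' hy (B.inv_mem hb), by simp⟩
    rw [e]
    exact aeq_refl _
  have part2 : ∀ g : G,
      AlmostEqSets (rproj Lam ((fun x => x * g) '' amalgX Lam T T'))
        (rproj Lam (amalgX Lam T T')) := by
    have hlist : ∀ l : List G, (∀ x ∈ l, x ∈ A ∨ x ∈ B) →
        AlmostEqSets (rproj Lam ((fun x => x * l.prod) '' amalgX Lam T T'))
          (rproj Lam (amalgX Lam T T')) := by
      intro l
      induction l with
      | nil => intro _; simpa using hP1
      | cons x rest ih =>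
        intro hmem
        rw [List.prod_cons]
        refine hPmul _ _ ?_ (ih fun y hy => hmem y (List.mem_cons_of_mem _ hy))
        rcases hmem x List.mem_cons_self with h | h
        exacts [hPA x h, hPB x h]
    intro g
    obtain ⟨⟨l, lam⟩, ⟨hl, hlam, heq⟩, -⟩ := hNF g
    rw [heq]
    exact hPmul _ _
      (hlist l fun x hx => (hl.1 x hx).2.imp (fun h => hT.1 h) fun h => hT'.1 h)
      (hPA lam (hLA hlam))
  exact ⟨part1, part2, part3, part1, part2⟩
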